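/- Let l : ℝ → ℝ be a convex surrogate loss (convex and l ≥ l_{0-1} pointwise), let μ be a probability measure on a set X, let f : X → ℝ be integrable, and let μ̄ be the product of μ with the uniform distribution on {±1}. Then ∫ |f| dμ ≤ (2/|∂₊l(0)|) · E_{(x,y)∼μ̄}[l(y f(x))], provided ∂₊l(0) < 0. -/

import Mathlib

open MeasureTheory

theorem stmt8 {X : Type*} [MeasurableSpace X] (μ : Measure X) [IsProbabilityMeasure μ]
    (l : ℝ → ℝ) (hconv : ConvexOn ℝ Set.univ l)
    (hl01 : ∀ x, (if x ≤ 0 then (1 : ℝ) else 0) ≤ l x)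
    (hl0 : ∀ x, 0 ≤ l x)
    (a : ℝ) (ha : HasDerivWithinAt l a (Set.Ici 0) 0) (hneg : a < 0)
    (f : X → ℝ) (hf : Integrable f μ)
    (h1 : Integrable (fun x => l (f x)) μ) (h2 : Integrable (fun x => l (-f x)) μ) :
    (∫ x, |f x| ∂μ) ≤
      (2 / |a|) * ((1 / 2) * ∫ x, l (f x) ∂μ + (1 / 2) * ∫ x, l (-f x) ∂μ) := by
  -- The slope of l at 0 tends to a from the right
  have hslope : Filter.Tendsto (slope l 0) (nhdsWithin 0 (Set.Ioi 0)) (nhds a) := by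
    have := hasDerivWithinAt_iff_tendsto_slope.mp ha
    have heq : (Set.Ici (0:ℝ)) \ {0} = Set.Ioi 0 := by
      ext t; simp [Set.mem_diff, lt_iff_le_and_ne, eq_comm]
    rwa [heq] at this
  -- supporting line: l 0 + a * s ≤ l s for all s
  have key : ∀ s : ℝ, l 0 + a * s ≤ l s := by
    intro s
    rcases lt_trichotomy s 0 with hs | hs | hs
    · -- slope(0,s) ≤ slope(0,t) for t > 0, take t → 0+
      have hle : slope l 0 s ≤ a := by
        refine ge_of_tendsto hslope ?_
        filter_upwards [self_mem_nhdsWithin] with t ht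
        have := hconv.secant_mono (a := 0) (x := s) (y := t)
          (Set.mem_univ _) (Set.mem_univ _) (Set.mem_univ _)
          (by linarith) (ne_of_gt ht) (by linarith [Set.mem_Ioi.mp ht])
        simpa [slope_def_field] using this
      have : (l s - l 0) / s ≤ a := by simpa [slope_def_field] using hle
      have := (div_le_iff_of_neg hs).mp this
      linarith
    · subst hs; simp
    · -- a ≤ slope(0,s)
      have hle : a ≤ slope l 0 s := by
        refine le_of_tendsto hslope ?_
        filter_upwards [Ioo_mem_nhdsGT_of_mem (Set.left_mem_Ico.mpr hs)] with t ht
        have := hconv.secant_mono (a := 0) (x := t) (y := s)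
          (Set.mem_univ _) (Set.mem_univ _) (Set.mem_univ _)
          (ne_of_gt ht.1) (ne_of_gt hs) (le_of_lt ht.2)
        simpa [slope_def_field] using this
      have : a ≤ (l s - l 0) / s := by simpa [slope_def_field] using hle
      have := (le_div_iff₀ hs).mp this
      linarith
  have hl00 : (0:ℝ) ≤ l 0 := hl0 0
  -- pointwise bound: |a| * |f x| ≤ l (f x) + l (-f x)
  have hpt : ∀ x, |f x| ≤ (l (f x) + l (-f x)) / |a| := by
    intro x
    have habs : |a| = -a := abs_of_neg hneg
    have h1' := key (-|f x|)
    have h2' : l (-|f x|) ≤ l (f x) + l (-f x) := by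
      rcases le_or_gt (f x) 0 with h | h
      · have : -|f x| = f x := by rw [abs_of_nonpos h]; ring
        rw [this]; linarith [hl0 (-f x)]
      · have : -|f x| = -f x := by rw [abs_of_pos h]
        rw [this]; linarith [hl0 (f x)]
    rw [le_div_iff₀ (abs_pos.mpr (ne_of_lt hneg))]
    nlinarith [abs_nonneg (f x)]
  -- integrate
  have hint : Integrable (fun x => (l (f x) + l (-f x)) / |a|) μ :=
    (h1.add h2).div_const _
  have hmono : (∫ x, |f x| ∂μ) ≤ ∫ x, (l (f x) + l (-f x)) / |a| ∂μ :=
    integral_mono hf.abs hint hpt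
  have : (∫ x, (l (f x) + l (-f x)) / |a| ∂μ)
      = (2 / |a|) * ((1 / 2) * ∫ x, l (f x) ∂μ + (1 / 2) * ∫ x, l (-f x) ∂μ) := by
    rw [integral_div, integral_add h1 h2]
    field_simp
  linarith [hmono, this.symm.le]
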